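/- For every c ∈ [−1,1]: (i) S⁺_c and S⁻_c map [0,2] into [0,2], and S⁻_c maps [0,2] into [0,1]; (ii) if c ≠ 0 then R_c(S⁺_c(w)) = w and R_c(S⁻_c(w)) = w for every w ∈ [0,2]; (iii) if c ∈ [0,1] then for all w₁, w₂ ∈ [0,1], |S⁻_c(w₁) − S⁻_c(w₂)| ≤ (c/(2√2))·|w₁ − w₂|; in particular S⁻_c is a strict contraction of [0,1] with contraction ratio at most 1/(2√2). -/

import Mathlib

/-- The inverse branch `S⁺_c(w) = 1 + (1/√2)·√(1 + (1−w)c)` of the spectral decimation map. -/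
noncomputable def Splus (c w : ℝ) : ℝ := 1 + (Real.sqrt 2)⁻¹ * Real.sqrt (1 + (1 - w) * c)

/-- The inverse branch `S⁻_c(w) = 1 − (1/√2)·√(1 + (1−w)c)` of the spectral decimation map. -/
noncomputable def Sminus (c w : ℝ) : ℝ := 1 - (Real.sqrt 2)⁻¹ * Real.sqrt (1 + (1 - w) * c)

/-- The spectral decimation map `R_c(z) = (−2z² + 4z − 1 + c)/c`. -/
noncomputable def Rc (c z : ℝ) : ℝ := (-2 * z ^ 2 + 4 * z - 1 + c) / c

lemma sqrt_diff_le {a b : ℝ} (ha : 1 ≤ a) (hb : 1 ≤ b) :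
    |Real.sqrt a - Real.sqrt b| ≤ |a - b| / 2 := by
  have hsa : Real.sqrt a ^ 2 = a := Real.sq_sqrt (by linarith)
  have hsb : Real.sqrt b ^ 2 = b := Real.sq_sqrt (by linarith)
  have h1a : 1 ≤ Real.sqrt a := by
    rw [show (1:ℝ) = Real.sqrt 1 by simp]; exact Real.sqrt_le_sqrt ha
  have h1b : 1 ≤ Real.sqrt b := by
    rw [show (1:ℝ) = Real.sqrt 1 by simp]; exact Real.sqrt_le_sqrt hb
  rcases le_total a b with h | h
  · have hs : Real.sqrt a ≤ Real.sqrt b := Real.sqrt_le_sqrt h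
    rw [abs_of_nonpos (by linarith), abs_of_nonpos (by linarith)]
    nlinarith [mul_nonneg (sub_nonneg.2 hs) (by linarith : (0:ℝ) ≤ Real.sqrt a + Real.sqrt b - 2)]
  · have hs : Real.sqrt b ≤ Real.sqrt a := Real.sqrt_le_sqrt h
    rw [abs_of_nonneg (by linarith), abs_of_nonneg (by linarith)]
    nlinarith [mul_nonneg (sub_nonneg.2 hs) (by linarith : (0:ℝ) ≤ Real.sqrt a + Real.sqrt b - 2)]

/-- Basic properties of the inverse branches of the spectral decimation map: (i) `S±_c`
map `[0,2]` into `[0,2]`, and `S⁻_c` maps `[0,2]` into `[0,1]`; (ii) for `c ≠ 0` they are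
right inverses of `R_c` on `[0,2]`; (iii) for `c ∈ [0,1]`, `S⁻_c` is `c/(2√2)`-Lipschitz
on `[0,1]`, in particular a strict contraction with ratio at most `1/(2√2)`. -/
theorem stmt13 (c : ℝ) (hc : c ∈ Set.Icc (-1 : ℝ) 1) :
    (∀ w ∈ Set.Icc (0 : ℝ) 2,
        Splus c w ∈ Set.Icc (0 : ℝ) 2 ∧ Sminus c w ∈ Set.Icc (0 : ℝ) 2 ∧
          Sminus c w ∈ Set.Icc (0 : ℝ) 1) ∧
    (c ≠ 0 → ∀ w ∈ Set.Icc (0 : ℝ) 2, Rc c (Splus c w) = w ∧ Rc c (Sminus c w) = w) ∧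
    (c ∈ Set.Icc (0 : ℝ) 1 → ∀ w₁ ∈ Set.Icc (0 : ℝ) 1, ∀ w₂ ∈ Set.Icc (0 : ℝ) 1,
        |Sminus c w₁ - Sminus c w₂| ≤ c / (2 * Real.sqrt 2) * |w₁ - w₂| ∧
        |Sminus c w₁ - Sminus c w₂| ≤ 1 / (2 * Real.sqrt 2) * |w₁ - w₂|) := by
  obtain ⟨hc1, hc2⟩ := hc
  have hs2 : Real.sqrt 2 ^ 2 = 2 := Real.sq_sqrt (by norm_num)
  have hs2pos : (0:ℝ) < Real.sqrt 2 := Real.sqrt_pos.2 (by norm_num)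
  have hs2ge : (1:ℝ) ≤ Real.sqrt 2 := by nlinarith
  -- generic bound on the sqrt term for w ∈ [0,2]
  have key : ∀ w ∈ Set.Icc (0:ℝ) 2,
      0 ≤ (Real.sqrt 2)⁻¹ * Real.sqrt (1 + (1 - w) * c) ∧
      (Real.sqrt 2)⁻¹ * Real.sqrt (1 + (1 - w) * c) ≤ 1 := by
    intro w ⟨hw0, hw2⟩
    have hA : 1 + (1 - w) * c ≤ 2 := by nlinarith
    have hsA : Real.sqrt (1 + (1 - w) * c) ≤ Real.sqrt 2 := Real.sqrt_le_sqrt hA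
    constructor
    · positivity
    · rw [inv_mul_le_iff₀ hs2pos]; simpa using hsA
  refine ⟨?_, ?_, ?_⟩
  · intro w hw
    obtain ⟨h0, h1⟩ := key w hw
    refine ⟨⟨?_, ?_⟩, ⟨?_, ?_⟩, ⟨?_, ?_⟩⟩ <;> simp [Splus, Sminus] <;> linarith
  · intro hcne w ⟨hw0, hw2⟩
    have hA0 : 0 ≤ 1 + (1 - w) * c := by nlinarith
    have hsqA : Real.sqrt (1 + (1 - w) * c) ^ 2 = 1 + (1 - w) * c := Real.sq_sqrt hA0
    have hinv : ((Real.sqrt 2)⁻¹) ^ 2 = 1 / 2 := by rw [inv_pow, hs2]; norm_num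
    constructor <;>
    · simp only [Rc, Splus, Sminus]
      rw [div_eq_iff hcne]
      linear_combination (-2 * Real.sqrt (1 + (1 - w) * c) ^ 2) * hinv - hsqA
  · intro ⟨hc0, _⟩ w₁ ⟨h10, h11⟩ w₂ ⟨h20, h21⟩
    have hA1 : 1 ≤ 1 + (1 - w₁) * c := by nlinarith
    have hA2 : 1 ≤ 1 + (1 - w₂) * c := by nlinarith
    have hd := sqrt_diff_le hA1 hA2
    have heq : Sminus c w₁ - Sminus c w₂ =
        (Real.sqrt 2)⁻¹ * (Real.sqrt (1 + (1 - w₂) * c) - Real.sqrt (1 + (1 - w₁) * c)) := by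
      simp [Sminus]; ring
    have habs : |Sminus c w₁ - Sminus c w₂| =
        (Real.sqrt 2)⁻¹ * |Real.sqrt (1 + (1 - w₂) * c) - Real.sqrt (1 + (1 - w₁) * c)| := by
      rw [heq, abs_mul, abs_of_nonneg (by positivity)]
    have hAA : |1 + (1 - w₂) * c - (1 + (1 - w₁) * c)| = c * |w₁ - w₂| := by
      rw [show 1 + (1 - w₂) * c - (1 + (1 - w₁) * c) = c * (w₁ - w₂) by ring,
        abs_mul, abs_of_nonneg hc0]
    have h1 : |Sminus c w₁ - Sminus c w₂| ≤ c / (2 * Real.sqrt 2) * |w₁ - w₂| := by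
      rw [habs]
      have := sqrt_diff_le hA2 hA1
      rw [hAA] at this
      calc (Real.sqrt 2)⁻¹ * |Real.sqrt (1 + (1 - w₂) * c) - Real.sqrt (1 + (1 - w₁) * c)|
          ≤ (Real.sqrt 2)⁻¹ * (c * |w₁ - w₂| / 2) := by
            apply mul_le_mul_of_nonneg_left this (by positivity)
        _ = c / (2 * Real.sqrt 2) * |w₁ - w₂| := by field_simp
    refine ⟨h1, h1.trans ?_⟩
    exact mul_le_mul_of_nonneg_right
      ((div_le_div_iff_of_pos_right (by positivity)).2 hc2) (abs_nonneg _)
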